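/- Let γ, σ² : [0,1] → ℝ be continuous with σ²(u) > 0 for all u ∈ [0,1] (condition (UE)), let Γ(u) := ∫₀^u γ(v) dv, g := ∫₀¹ γ(v) dv, assume (E1): Γ(u) − g·u > 0 for all u ∈ (0,1), let Ψ(u) := ∫_{1/2}^u σ²(v)/(2(Γ(v) − g·v)) dv and p_c := 2(g − γ(1))/σ²(1), and suppose p_c > 0 and Z̄^{p_c} := ∫₀¹ exp(p_c·Ψ(u)) du = +∞. Then for every continuous function f : [0,1] → ℝ, lim_{p → p_c⁻} ⟨f, Π̄^p⟩ = f(1), where ⟨f, Π̄^p⟩ := (∫₀¹ f(u)·exp(p·Ψ(u)) du)/(∫₀¹ exp(p·Ψ(u)) du). -/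

import Mathlib

open MeasureTheory Set Filter Topology

/-- `Γ(u) = ∫₀^u γ(v) dv`. -/
noncomputable def Gam (γ : ℝ → ℝ) (u : ℝ) : ℝ := ∫ v in (0:ℝ)..u, γ v

/-- market mean growth rate `g = ∫₀¹ γ(v) dv`. -/
noncomputable def mg (γ : ℝ → ℝ) : ℝ := ∫ v in (0:ℝ)..1, γ v

/-- `Ψ(u) = ∫_{1/2}^u σ²(v) / (2 (Γ(v) - g v)) dv`. -/
noncomputable def Psi (γ σ2 : ℝ → ℝ) (u : ℝ) : ℝ :=
  ∫ v in (1/2:ℝ)..u, σ2 v / (2 * (Gam γ v - mg γ * v))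

/-- critical diversity index `p_c = 2 (g - γ(1)) / σ²(1)`. -/
noncomputable def pcrit (γ σ2 : ℝ → ℝ) : ℝ := 2 * (mg γ - γ 1) / σ2 1

/-- critical index `q_c = 2 (γ(0) - g) / σ²(0)`. -/
noncomputable def qcrit (γ σ2 : ℝ → ℝ) : ℝ := 2 * (γ 0 - mg γ) / σ2 0

/-- `⟨f, Π̄^p⟩ = (∫₀¹ f(u) exp(p Ψ(u)) du) / (∫₀¹ exp(p Ψ(u)) du)`. -/
noncomputable def bracket (γ σ2 f : ℝ → ℝ) (p : ℝ) : ℝ :=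
  (∫ u in Set.Ioo (0:ℝ) 1, f u * Real.exp (p * Psi γ σ2 u)) /
    ∫ u in Set.Ioo (0:ℝ) 1, Real.exp (p * Psi γ σ2 u)

section Core
variable (γ σ2 : ℝ → ℝ)

/-- the integrand of Psi -/
noncomputable def hh (v : ℝ) : ℝ := σ2 v / (2 * (Gam γ v - mg γ * v))

lemma half_mem : (1/2 : ℝ) ∈ Ioo (0:ℝ) 1 := by norm_num

variable (hγ : Continuous γ) (hσ : Continuous σ2)
  (hUE : ∀ u ∈ Set.Icc (0:ℝ) 1, 0 < σ2 u)
  (hE1 : ∀ u ∈ Set.Ioo (0:ℝ) 1, 0 < Gam γ u - mg γ * u)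

include hγ in
lemma gam_cont : Continuous (Gam γ) :=
  intervalIntegral.continuous_primitive (fun a b => hγ.intervalIntegrable a b) 0

include hγ hσ hE1 in
lemma hh_contOn : ContinuousOn (hh γ σ2) (Ioo 0 1) := by
  apply ContinuousOn.div hσ.continuousOn
  · exact (continuous_const.mul ((gam_cont γ hγ).sub (continuous_const.mul continuous_id))).continuousOn
  · intro v hv
    have := hE1 v hv
    positivity

include hUE hE1 in
lemma hh_pos : ∀ v ∈ Ioo (0:ℝ) 1, 0 < hh γ σ2 v := by
  intro v hv
  have h1 := hUE v (Ioo_subset_Icc_self hv)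
  have h2 := hE1 v hv
  exact div_pos h1 (by positivity)

include hγ hσ hE1 in
lemma hh_intble : ∀ a ∈ Ioo (0:ℝ) 1, ∀ b ∈ Ioo (0:ℝ) 1,
    IntervalIntegrable (hh γ σ2) volume a b := by
  intro a ha b hb
  exact ((hh_contOn γ σ2 hγ hσ hE1).mono
    (Set.ordConnected_Ioo.uIcc_subset ha hb)).intervalIntegrable

include hγ hσ hE1 in
lemma psi_add : ∀ a ∈ Ioo (0:ℝ) 1, ∀ b ∈ Ioo (0:ℝ) 1,
    Psi γ σ2 b = Psi γ σ2 a + ∫ v in a..b, hh γ σ2 v := by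
  intro a ha b hb
  have := intervalIntegral.integral_add_adjacent_intervals
    (hh_intble γ σ2 hγ hσ hE1 _ (half_mem) _ ha) (hh_intble γ σ2 hγ hσ hE1 _ ha _ hb)
  simp only [Psi, hh] at *
  linarith

include hγ hσ hUE hE1 in
lemma psi_mono : MonotoneOn (Psi γ σ2) (Ioo 0 1) := by
  intro a ha b hb hab
  have h := psi_add γ σ2 hγ hσ hE1 a ha b hb
  have h2 : 0 ≤ ∫ v in a..b, hh γ σ2 v := by
    apply intervalIntegral.integral_nonneg hab
    intro v hv
    have hvm : v ∈ Ioo (0:ℝ) 1 := ⟨lt_of_lt_of_le ha.1 hv.1, lt_of_le_of_lt hv.2 hb.2⟩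
    exact (hh_pos γ σ2 hUE hE1 v hvm).le
  linarith

lemma psi_half : Psi γ σ2 (1/2) = 0 := intervalIntegral.integral_same

include hγ hσ hE1 in
lemma psi_contOn : ContinuousOn (Psi γ σ2) (Ioo 0 1) := by
  intro u hu
  have hne : Ioo (0:ℝ) 1 ∈ 𝓝 u := isOpen_Ioo.mem_nhds hu
  have hca : ContinuousAt (hh γ σ2) u :=
    (hh_contOn γ σ2 hγ hσ hE1).continuousAt hne
  have hd : HasDerivAt (Psi γ σ2) (hh γ σ2 u) u := by
    apply intervalIntegral.integral_hasDerivAt_right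
      (hh_intble γ σ2 hγ hσ hE1 _ (half_mem) _ hu)
      ⟨Ioo 0 1, hne, (hh_contOn γ σ2 hγ hσ hE1).aestronglyMeasurable measurableSet_Ioo⟩ hca
  exact hd.continuousAt.continuousWithinAt

end Core
section C2
variable (γ σ2 : ℝ → ℝ) (hγ : Continuous γ) (hσ : Continuous σ2)
  (hUE : ∀ u ∈ Set.Icc (0:ℝ) 1, 0 < σ2 u)

include hγ in
lemma denom_eq (u : ℝ) : Gam γ u - mg γ * u = ∫ v in u..1, (mg γ - γ v) := by
  have h1 : ∫ v in u..1, (mg γ - γ v) = (1-u) • mg γ - ∫ v in u..1, γ v := by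
    rw [intervalIntegral.integral_sub (intervalIntegrable_const) (hγ.intervalIntegrable u 1)]
    simp
  have h2 : Gam γ u + ∫ v in u..1, γ v = mg γ :=
    intervalIntegral.integral_add_adjacent_intervals (hγ.intervalIntegrable 0 u)
      (hγ.intervalIntegrable u 1)
  rw [h1]; simp only [smul_eq_mul]; linarith

include hUE in
lemma S_pos : 0 < σ2 1 := hUE 1 ⟨by norm_num, le_refl 1⟩

include hUE in
lemma A_pos (hpc : 0 < pcrit γ σ2) : 0 < mg γ - γ 1 := by
  have hS := S_pos σ2 hUE
  have h := mul_pos hpc hS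
  rw [pcrit, div_mul_cancel₀ _ (ne_of_gt hS)] at h
  linarith

include hγ hσ hUE in
lemma tail_bound (hpc : 0 < pcrit γ σ2) (ε : ℝ) (hε : 0 < ε) :
    ∃ δ, 0 < δ ∧ δ < 1/2 ∧ ∀ u ∈ Ico (1-δ) 1,
      hh γ σ2 u ≤ (1+ε)/(pcrit γ σ2 * (1-u)) := by
  set S := σ2 1 with hSdef
  set A := mg γ - γ 1 with hAdef
  have hS : 0 < S := S_pos σ2 hUE
  have hA : 0 < A := A_pos γ σ2 hUE hpc
  set ε₁ := ε/(ε+2) with hε₁def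
  have hε₁ : 0 < ε₁ := by positivity
  have hε₁1 : ε₁ < 1 := by rw [hε₁def, div_lt_one (by linarith)]; linarith
  have hkey : (1+ε)*(1-ε₁) = 1+ε₁ := by rw [hε₁def]; field_simp; ring
  obtain ⟨δ₁, hδ₁, hγb⟩ := Metric.continuousAt_iff.1 hγ.continuousAt (A*ε₁) (by positivity)
  obtain ⟨δ₂, hδ₂, hσb⟩ := Metric.continuousAt_iff.1 (hσ.continuousAt (x := 1)) (S*ε₁) (by positivity)
  refine ⟨min (min δ₁ δ₂ / 2) (1/4), by positivity, by
    apply lt_of_le_of_lt (min_le_right _ _); norm_num, ?_⟩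
  intro u hu
  have hu1 : u < 1 := hu.2
  have hud : 1 - min (min δ₁ δ₂ / 2) (1/4) ≤ u := hu.1
  have hdist : ∀ v ∈ Icc u 1, dist v 1 < min δ₁ δ₂ := by
    intro v hv
    rw [Real.dist_eq, abs_of_nonpos (by linarith [hv.2])]
    have h1 : min (min δ₁ δ₂ / 2) (1/4) ≤ min δ₁ δ₂ / 2 := min_le_left _ _
    have h2 : 0 < min δ₁ δ₂ := lt_min hδ₁ hδ₂
    have := hv.1
    nlinarith
  -- denominator lower bound
  have hDₗ : A*(1-ε₁)*(1-u) ≤ Gam γ u - mg γ * u := by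
    rw [denom_eq γ hγ u]
    have : A*(1-ε₁)*(1-u) = ∫ v in u..1, A*(1-ε₁) := by
      rw [intervalIntegral.integral_const]; simp; ring
    rw [this]
    apply intervalIntegral.integral_mono_on hu1.le intervalIntegrable_const
      ((continuous_const.sub hγ).intervalIntegrable u 1)
    intro v hv
    have := hγb (lt_of_lt_of_le (hdist v hv) (min_le_left _ _))
    rw [Real.dist_eq] at this
    have := abs_lt.1 this
    simp only [hAdef]
    simp only [Pi.sub_apply]
    nlinarith [this.1, this.2]
  have hD : 0 < Gam γ u - mg γ * u :=
    lt_of_lt_of_le (mul_pos (mul_pos hA (by linarith)) (by linarith)) hDₗ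
  -- numerator upper bound
  have hNu : σ2 u ≤ S*(1+ε₁) := by
    have := hσb (lt_of_lt_of_le (hdist u ⟨le_refl u, hu1.le⟩) (min_le_right _ _))
    rw [Real.dist_eq] at this
    have := (abs_lt.1 this).2
    nlinarith
  have hpcS : pcrit γ σ2 * S = 2*A := by
    rw [pcrit, div_mul_cancel₀ _ (ne_of_gt hS)]
  have hσu : 0 < σ2 u := hUE u ⟨by
    have : (0:ℝ) < 1 - min (min δ₁ δ₂ / 2) (1/4) := by
      have : min (min δ₁ δ₂ / 2) (1/4) ≤ 1/4 := min_le_right _ _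
      linarith
    linarith, hu1.le⟩
  rw [hh, div_le_div_iff₀ (by linarith) (mul_pos hpc (by linarith))]
  have h1 : σ2 u * (pcrit γ σ2 * (1-u)) ≤ S*(1+ε₁) * (pcrit γ σ2 * (1-u)) :=
    mul_le_mul_of_nonneg_right hNu (le_of_lt (mul_pos hpc (by linarith)))
  have h2 : S*(1+ε₁)*(pcrit γ σ2 *(1-u)) = (1+ε)*(2*(A*(1-ε₁)*(1-u))) := by
    have e : S*(1+ε₁)*(pcrit γ σ2*(1-u)) = (1+ε₁)*(pcrit γ σ2*S)*(1-u) := by ring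
    rw [e, hpcS, ← hkey]; ring
  have h3 : (1+ε)*(2*(A*(1-ε₁)*(1-u))) ≤ (1+ε)*(2*(Gam γ u - mg γ * u)) := by
    apply mul_le_mul_of_nonneg_left (by linarith) (by linarith)
  linarith
end C2

section C3
variable (γ σ2 : ℝ → ℝ) (hγ : Continuous γ) (hσ : Continuous σ2)
  (hUE : ∀ u ∈ Set.Icc (0:ℝ) 1, 0 < σ2 u)
  (hE1 : ∀ u ∈ Set.Ioo (0:ℝ) 1, 0 < Gam γ u - mg γ * u)

include hγ hσ hUE hE1 in
lemma exp_bound (hpc : 0 < pcrit γ σ2) (p : ℝ) (hp : p ∈ Ioo 0 (pcrit γ σ2)) :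
    ∃ C, 0 < C ∧ ∃ α : ℝ, 0 ≤ α ∧ α < 1 ∧ ∀ u ∈ Ioo (0:ℝ) 1,
      Real.exp (p * Psi γ σ2 u) ≤ C * (1-u) ^ (-α) := by
  obtain ⟨hp0, hppc⟩ := hp
  set pc := pcrit γ σ2 with hpcdef
  set ε := (pc - p)/(2*p) with hεdef
  have hε : 0 < ε := div_pos (by linarith) (by linarith)
  set α := (p + pc)/(2*pc) with hαdef
  have hα0 : 0 < α := div_pos (by linarith) (by linarith)
  have hα1 : α < 1 := by rw [div_lt_one (by linarith)]; linarith
  have hαpc' : p * ((1+ε)/pc) = α := by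
    rw [hεdef, hαdef]; field_simp; ring
  obtain ⟨δ, hδ0, hδhalf, htb⟩ := tail_bound γ σ2 hγ hσ hUE hpc ε hε
  have h1δ : (1-δ) ∈ Ioo (0:ℝ) 1 := ⟨by linarith, by linarith⟩
  refine ⟨Real.exp (p * Psi γ σ2 (1-δ)) * (δ ^ α + 1), by positivity, α, hα0.le, hα1, ?_⟩
  intro u hu
  have h1u : 0 < 1 - u := by linarith [hu.2]
  have e2 : 1 ≤ (1-u)^(-α) :=
    Real.one_le_rpow_of_pos_of_le_one_of_nonpos h1u (by linarith [hu.1]) (by linarith)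
  have hrn : (0:ℝ) ≤ δ ^ α := Real.rpow_nonneg hδ0.le α
  have hE : 0 < Real.exp (p * Psi γ σ2 (1-δ)) := Real.exp_pos _
  rcases le_or_gt u (1-δ) with hc | hc
  · have hm : Psi γ σ2 u ≤ Psi γ σ2 (1-δ) := psi_mono γ σ2 hγ hσ hUE hE1 hu h1δ hc
    have e1 : Real.exp (p * Psi γ σ2 u) ≤ Real.exp (p * Psi γ σ2 (1-δ)) :=
      Real.exp_le_exp.2 (mul_le_mul_of_nonneg_left hm hp0.le)
    nlinarith [mul_le_mul_of_nonneg_left e2 (le_of_lt (mul_pos hE (by linarith : (0:ℝ) < δ^α + 1)))]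
  · -- tail case
    have hint : Psi γ σ2 u = Psi γ σ2 (1-δ) + ∫ v in (1-δ)..u, hh γ σ2 v :=
      psi_add γ σ2 hγ hσ hE1 (1-δ) h1δ u hu
    have hRcont : ContinuousOn (fun v => (1+ε)/(pc*(1-v))) (uIcc (1-δ) u) := by
      apply ContinuousOn.div continuousOn_const
        (continuousOn_const.mul (continuousOn_const.sub continuousOn_id))
      intro v hv
      rw [uIcc_of_le hc.le] at hv
      have : v < 1 := lt_of_le_of_lt hv.2 hu.2
      have : 0 < pc * (1-v) := mul_pos hpc (by linarith)
      exact ne_of_gt this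
    have hI1 : (∫ v in (1-δ)..u, hh γ σ2 v) ≤ ∫ v in (1-δ)..u, (1+ε)/(pc*(1-v)) := by
      apply intervalIntegral.integral_mono_on hc.le
        (hh_intble γ σ2 hγ hσ hE1 _ h1δ _ hu) hRcont.intervalIntegrable
      intro v hv
      exact htb v ⟨hv.1, lt_of_le_of_lt hv.2 hu.2⟩
    have hI2 : (∫ v in (1-δ)..u, (1+ε)/(pc*(1-v)))
        = (1+ε)/pc * (Real.log δ - Real.log (1-u)) := by
      have e : ∀ v : ℝ, (1+ε)/(pc*(1-v)) = ((1+ε)/pc) * (1-v)⁻¹ := by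
        intro v; rw [div_mul_eq_div_div, div_eq_mul_inv]
      simp_rw [e]
      rw [intervalIntegral.integral_const_mul]
      congr 1
      have hcomp := intervalIntegral.integral_comp_sub_left (a := 1-δ) (b := u)
        (fun w : ℝ => w⁻¹) 1
      rw [hcomp, show (1:ℝ) - (1-δ) = δ by ring, integral_inv
        (notMem_uIcc_of_lt h1u hδ0),
        Real.log_div (ne_of_gt hδ0) (ne_of_gt h1u)]
    have h4 : p * ∫ v in (1-δ)..u, hh γ σ2 v
        ≤ α * (Real.log δ - Real.log (1-u)) := by
      calc p * ∫ v in (1-δ)..u, hh γ σ2 v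
          ≤ p * ((1+ε)/pc * (Real.log δ - Real.log (1-u))) :=
            mul_le_mul_of_nonneg_left (le_of_le_of_eq hI1 hI2) hp0.le
        _ = α * (Real.log δ - Real.log (1-u)) := by rw [← mul_assoc, hαpc']
    have h5 : p * Psi γ σ2 u ≤ p * Psi γ σ2 (1-δ)
        + (α * Real.log δ - α * Real.log (1-u)) := by
      rw [hint, mul_add]; nlinarith
    calc Real.exp (p * Psi γ σ2 u)
        ≤ Real.exp (p * Psi γ σ2 (1-δ) + (α * Real.log δ - α * Real.log (1-u))) :=
          Real.exp_le_exp.2 h5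
      _ = Real.exp (p * Psi γ σ2 (1-δ)) * δ ^ α * (1-u) ^ (-α) := by
          rw [Real.rpow_def_of_pos hδ0, Real.rpow_def_of_pos h1u, ← Real.exp_add,
            ← Real.exp_add]
          ring_nf
      _ ≤ Real.exp (p * Psi γ σ2 (1-δ)) * (δ ^ α + 1) * (1-u) ^ (-α) := by
          apply mul_le_mul_of_nonneg_right _ (Real.rpow_nonneg h1u.le _)
          nlinarith
end C3

section C4
variable (γ σ2 : ℝ → ℝ) (hγ : Continuous γ) (hσ : Continuous σ2)
  (hUE : ∀ u ∈ Set.Icc (0:ℝ) 1, 0 < σ2 u)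
  (hE1 : ∀ u ∈ Set.Ioo (0:ℝ) 1, 0 < Gam γ u - mg γ * u)

include hγ hσ hE1 in
lemma exp_meas (p : ℝ) :
    AEStronglyMeasurable (fun u => Real.exp (p * Psi γ σ2 u))
      (volume.restrict (Ioo (0:ℝ) 1)) := by
  have : ContinuousOn (fun u => Real.exp (p * Psi γ σ2 u)) (Ioo 0 1) :=
    Real.continuous_exp.comp_continuousOn
      ((continuousOn_const.mul (psi_contOn γ σ2 hγ hσ hE1)))
  exact this.aestronglyMeasurable measurableSet_Ioo

lemma rpow_integrableOn (α : ℝ) (hα : α < 1) :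
    IntegrableOn (fun u : ℝ => (1-u) ^ (-α)) (Ioo (0:ℝ) 1) volume := by
  have h1 : IntervalIntegrable (fun x : ℝ => x ^ (-α)) volume 0 1 :=
    intervalIntegral.intervalIntegrable_rpow' (by linarith)
  have h2 := (h1.comp_sub_left 1)
  simp only [sub_zero, sub_self] at h2
  have h3 := h2.symm
  rw [intervalIntegrable_iff_integrableOn_Ioo_of_le (by norm_num)] at h3
  exact h3

include hγ hσ hUE hE1 in
lemma integrable_exp (hpc : 0 < pcrit γ σ2) (p : ℝ) (hp : p ∈ Ioo 0 (pcrit γ σ2)) :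
    IntegrableOn (fun u => Real.exp (p * Psi γ σ2 u)) (Ioo (0:ℝ) 1) volume := by
  obtain ⟨C, hC, α, hα0, hα1, hbd⟩ := exp_bound γ σ2 hγ hσ hUE hE1 hpc p hp
  apply Integrable.mono' ((rpow_integrableOn α hα1).const_mul C)
    (exp_meas γ σ2 hγ hσ hE1 p)
  rw [ae_restrict_iff' measurableSet_Ioo]
  apply ae_of_all
  intro u hu
  rw [Real.norm_eq_abs, abs_of_pos (Real.exp_pos _)]
  exact hbd u hu
end C4

section C5
variable (γ σ2 : ℝ → ℝ) (hγ : Continuous γ) (hσ : Continuous σ2)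
  (hUE : ∀ u ∈ Set.Icc (0:ℝ) 1, 0 < σ2 u)
  (hE1 : ∀ u ∈ Set.Ioo (0:ℝ) 1, 0 < Gam γ u - mg γ * u)

include hγ hσ hUE hE1 in
lemma psi_nonneg_right : ∀ u ∈ Ioo (1/2:ℝ) 1, 0 ≤ Psi γ σ2 u := by
  intro u hu
  have h := psi_mono γ σ2 hγ hσ hUE hE1 (half_mem) ⟨by linarith [hu.1], hu.2⟩ hu.1.le
  rwa [psi_half] at h

include hγ hσ hUE hE1 in
lemma psi_nonpos_left : ∀ u ∈ Ioc (0:ℝ) (1/2), Psi γ σ2 u ≤ 0 := by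
  intro u hu
  have h := psi_mono γ σ2 hγ hσ hUE hE1 ⟨hu.1, by linarith [hu.2]⟩ (half_mem) hu.2
  rwa [psi_half] at h

include hγ hσ hUE hE1 in
lemma lint_top (hpc : 0 < pcrit γ σ2)
    (hZ : (∫⁻ u in Set.Ioo (0:ℝ) 1,
        ENNReal.ofReal (Real.exp (pcrit γ σ2 * Psi γ σ2 u))) = ⊤) :
    (∫⁻ u in Set.Ioo (1/2:ℝ) 1,
        ENNReal.ofReal (Real.exp (pcrit γ σ2 * Psi γ σ2 u))) = ⊤ := by
  have hsplit : Ioo (0:ℝ) 1 = Ioc 0 (1/2) ∪ Ioo (1/2) 1 :=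
    (Set.Ioc_union_Ioo_eq_Ioo (by norm_num) (by norm_num)).symm
  have hdisj : Disjoint (Ioc (0:ℝ) (1/2)) (Ioo (1/2:ℝ) 1) :=
    Set.disjoint_left.2 fun x hx hx' => absurd hx.2 (not_le.2 hx'.1)
  rw [hsplit, lintegral_union measurableSet_Ioo hdisj] at hZ
  have hfin : (∫⁻ u in Set.Ioc (0:ℝ) (1/2),
      ENNReal.ofReal (Real.exp (pcrit γ σ2 * Psi γ σ2 u))) ≠ ⊤ := by
    have hle : (∫⁻ u in Set.Ioc (0:ℝ) (1/2),
        ENNReal.ofReal (Real.exp (pcrit γ σ2 * Psi γ σ2 u)))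
        ≤ ∫⁻ _u in Set.Ioc (0:ℝ) (1/2), 1 := by
      apply setLIntegral_mono measurable_const
      intro u hu
      apply ENNReal.ofReal_le_one.2
      rw [Real.exp_le_one_iff]
      exact mul_nonpos_of_nonneg_of_nonpos hpc.le (psi_nonpos_left γ σ2 hγ hσ hUE hE1 u hu)
    apply ne_of_lt (lt_of_le_of_lt hle _)
    simp [Real.volume_Ioc]
  exact (ENNReal.add_eq_top.1 hZ).resolve_left hfin

include hγ hσ hUE hE1 in
lemma Z_large (hpc : 0 < pcrit γ σ2)
    (hZ : (∫⁻ u in Set.Ioo (0:ℝ) 1,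
        ENNReal.ofReal (Real.exp (pcrit γ σ2 * Psi γ σ2 u))) = ⊤) (Cb : ℝ) :
    ∃ p₀ ∈ Ico (0:ℝ) (pcrit γ σ2), ∀ p ∈ Ioo p₀ (pcrit γ σ2),
      Cb ≤ ∫ u in Ioo (0:ℝ) 1, Real.exp (p * Psi γ σ2 u) := by
  rcases le_or_gt Cb 0 with hCb | hCb
  · refine ⟨0, ⟨le_refl 0, hpc⟩, fun p hp => le_trans hCb ?_⟩
    apply setIntegral_nonneg measurableSet_Ioo
    intro u _; exact (Real.exp_pos _).le
  set pc := pcrit γ σ2 with hpcdef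
  set L : ℝ → ENNReal := fun p => ∫⁻ u in Set.Ioo (1/2:ℝ) 1,
      ENNReal.ofReal (Real.exp (p * Psi γ σ2 u)) with hLdef
  set pn : ℕ → ℝ := fun n => pc - pc/(n+2) with hpndef
  have hpn_mem : ∀ n, pn n ∈ Ioo (0:ℝ) pc := by
    intro n
    constructor
    · have h1 : pc/(n+2) < pc := by
        rw [div_lt_iff₀ (by positivity)]
        nlinarith [Nat.cast_nonneg (α := ℝ) n]
      simp only [hpndef]; linarith
    · have : 0 < pc/(n+2) := by positivity
      simp only [hpndef]; linarith
  have hmeasL : ∀ p, AEMeasurable (fun u => ENNReal.ofReal (Real.exp (p * Psi γ σ2 u)))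
      (volume.restrict (Ioo (1/2:ℝ) 1)) := by
    intro p
    have := (exp_meas γ σ2 hγ hσ hE1 p).aemeasurable
    exact (ENNReal.measurable_ofReal.comp_aemeasurable
      (this.mono_measure (Measure.restrict_mono (Set.Ioo_subset_Ioo (by norm_num) le_rfl) le_rfl)))
  have hLtop : Tendsto (fun n => L (pn n)) atTop (𝓝 ⊤) := by
    have hmct := MeasureTheory.lintegral_tendsto_of_tendsto_of_monotone
      (μ := volume.restrict (Ioo (1/2:ℝ) 1))
      (f := fun n u => ENNReal.ofReal (Real.exp (pn n * Psi γ σ2 u)))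
      (F := fun u => ENNReal.ofReal (Real.exp (pc * Psi γ σ2 u)))
      (fun n => hmeasL (pn n)) ?_ ?_
    · rw [lint_top γ σ2 hγ hσ hUE hE1 hpc hZ] at hmct
      exact hmct
    · rw [ae_restrict_iff' measurableSet_Ioo]
      apply ae_of_all
      intro u hu
      intro m n hmn
      apply ENNReal.ofReal_le_ofReal
      apply Real.exp_le_exp.2
      apply mul_le_mul_of_nonneg_right _ (psi_nonneg_right γ σ2 hγ hσ hUE hE1 u hu)
      have : pc/(m+2) ≥ pc/(n+2) := by
        apply div_le_div_of_nonneg_left hpc.le (by positivity)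
        have : (m:ℝ) ≤ n := Nat.cast_le.2 hmn
        linarith
      simp only [hpndef]; linarith
    · apply ae_of_all
      intro u
      have hpt : Tendsto (fun n => pn n) atTop (𝓝 pc) := by
        have h0 : Tendsto (fun n : ℕ => pc/(n+2)) atTop (𝓝 0) := by
          apply Tendsto.div_atTop tendsto_const_nhds
          apply Filter.tendsto_atTop_add_const_right
          exact tendsto_natCast_atTop_atTop
        have := h0.const_sub pc
        simpa using this
      exact (ENNReal.continuous_ofReal.tendsto _).comp
        ((Real.continuous_exp.tendsto _).comp ((hpt.mul_const _)))
  have hev : ∀ᶠ n in atTop, ENNReal.ofReal Cb < L (pn n) :=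
    hLtop.eventually (eventually_gt_nhds (ENNReal.ofReal_lt_top))
  obtain ⟨N, hN⟩ := hev.exists
  refine ⟨pn N, ⟨(hpn_mem N).1.le, (hpn_mem N).2⟩, ?_⟩
  intro p hp
  have hpmem : p ∈ Ioo 0 pc := ⟨lt_of_le_of_lt (hpn_mem N).1.le hp.1, hp.2⟩
  have hintp := integrable_exp γ σ2 hγ hσ hUE hE1 hpc p hpmem
  -- L p finite
  have hLple : L p ≤ ∫⁻ u in Set.Ioo (0:ℝ) 1,
      ENNReal.ofReal (Real.exp (p * Psi γ σ2 u)) :=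
    lintegral_mono_set (fun x hx => ⟨by linarith [hx.1], hx.2⟩)
  have hLpfin : L p ≠ ⊤ := by
    apply ne_of_lt (lt_of_le_of_lt hLple _)
    exact hintp.lintegral_lt_top
  -- L monotone
  have hmono : L (pn N) ≤ L p := by
    apply lintegral_mono_ae
    rw [ae_restrict_iff' measurableSet_Ioo]
    apply ae_of_all
    intro u hu
    apply ENNReal.ofReal_le_ofReal
    apply Real.exp_le_exp.2
    exact mul_le_mul_of_nonneg_right hp.1.le (psi_nonneg_right γ σ2 hγ hσ hUE hE1 u hu)
  have hlt : ENNReal.ofReal Cb < L p := lt_of_lt_of_le hN hmono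
  have hCble : Cb ≤ (L p).toReal := by
    have := (ENNReal.ofReal_lt_iff_lt_toReal hCb.le hLpfin).1 hlt
    linarith
  -- (L p).toReal = integral over Ioo (1/2) 1
  have hmeas2 : AEStronglyMeasurable (fun u => Real.exp (p * Psi γ σ2 u))
      (volume.restrict (Ioo (1/2:ℝ) 1)) :=
    (exp_meas γ σ2 hγ hσ hE1 p).mono_measure
      (Measure.restrict_mono (Set.Ioo_subset_Ioo (by norm_num) le_rfl) le_rfl)
  have heq : ∫ u in Ioo (1/2:ℝ) 1, Real.exp (p * Psi γ σ2 u) = (L p).toReal := by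
    rw [hLdef]
    exact integral_eq_lintegral_of_nonneg_ae (ae_of_all _ fun u => (Real.exp_pos _).le) hmeas2
  have hsub : ∫ u in Ioo (1/2:ℝ) 1, Real.exp (p * Psi γ σ2 u)
      ≤ ∫ u in Ioo (0:ℝ) 1, Real.exp (p * Psi γ σ2 u) := by
    apply setIntegral_mono_set hintp
      (ae_of_all _ fun u => (Real.exp_pos _).le)
    apply HasSubset.Subset.eventuallyLE
    intro x hx; exact ⟨by linarith [hx.1], hx.2⟩
  linarith [heq ▸ hCble]
end C5

section C6
variable (γ σ2 f : ℝ → ℝ) (hγ : Continuous γ) (hσ : Continuous σ2) (hf : Continuous f)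
  (hUE : ∀ u ∈ Set.Icc (0:ℝ) 1, 0 < σ2 u)
  (hE1 : ∀ u ∈ Set.Ioo (0:ℝ) 1, 0 < Gam γ u - mg γ * u)

include hγ hσ hf hUE hE1 in
theorem core (hpc : 0 < pcrit γ σ2)
    (hZ : (∫⁻ u in Set.Ioo (0:ℝ) 1,
        ENNReal.ofReal (Real.exp (pcrit γ σ2 * Psi γ σ2 u))) = ⊤) :
    Filter.Tendsto (bracket γ σ2 f)
      (nhdsWithin (pcrit γ σ2) (Set.Iio (pcrit γ σ2))) (nhds (f 1)) := by
  set pc := pcrit γ σ2 with hpcdef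
  rw [Metric.tendsto_nhds]
  intro ε hε
  -- bound on f
  obtain ⟨M, hM⟩ := isCompact_Icc.exists_bound_of_continuousOn
    (hf.continuousOn : ContinuousOn f (Icc (0:ℝ) 1))
  have hM0 : 0 ≤ M := le_trans (norm_nonneg (f 0)) (hM 0 ⟨le_refl 0, by norm_num⟩)
  have hM1 : |f 1| ≤ M := by
    have := hM 1 ⟨by norm_num, le_refl 1⟩; rwa [Real.norm_eq_abs] at this
  -- continuity of f at 1
  obtain ⟨δ₀, hδ₀, hfc⟩ := Metric.continuousAt_iff.1 (hf.continuousAt (x := 1)) (ε/4)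
    (by linarith)
  set δ := min (δ₀/2) (1/4) with hδdef
  have hδ0 : 0 < δ := lt_min (by linarith) (by norm_num)
  have hδ4 : δ ≤ 1/4 := min_le_right _ _
  have h1δ : (1-δ) ∈ Ioo (0:ℝ) 1 := ⟨by linarith, by linarith⟩
  set Cδ := Real.exp (pc * max 0 (Psi γ σ2 (1-δ))) with hCδdef
  have hCδ : 0 < Cδ := Real.exp_pos _
  -- uniform bound on exp (p * Psi (1-δ)) for p ∈ (0, pc)
  have hCδb : ∀ p ∈ Ioo (0:ℝ) pc, Real.exp (p * Psi γ σ2 (1-δ)) ≤ Cδ := by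
    intro p hp
    apply Real.exp_le_exp.2
    calc p * Psi γ σ2 (1-δ) ≤ p * max 0 (Psi γ σ2 (1-δ)) :=
          mul_le_mul_of_nonneg_left (le_max_right _ _) hp.1.le
      _ ≤ pc * max 0 (Psi γ σ2 (1-δ)) :=
          mul_le_mul_of_nonneg_right hp.2.le (le_max_left _ _)
  obtain ⟨p₀, hp₀, hp₀C⟩ := Z_large γ σ2 hγ hσ hUE hE1 hpc hZ (max 1 (8*M*Cδ/ε))
  have hmem : Ioo p₀ pc ∈ nhdsWithin pc (Iio pc) :=
    Ioo_mem_nhdsLT_of_mem ⟨hp₀.2, le_refl pc⟩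
  filter_upwards [hmem] with p hp
  have hpmem : p ∈ Ioo 0 pc := ⟨lt_of_le_of_lt hp₀.1 hp.1, hp.2⟩
  set e : ℝ → ℝ := fun u => Real.exp (p * Psi γ σ2 u) with hedef
  set Z := ∫ u in Ioo (0:ℝ) 1, e u with hZdef
  have hZC : max 1 (8*M*Cδ/ε) ≤ Z := hp₀C p hp
  have hZ1 : (1:ℝ) ≤ Z := le_trans (le_max_left _ _) hZC
  have hZ8 : 8*M*Cδ/ε ≤ Z := le_trans (le_max_right _ _) hZC
  have hZpos : 0 < Z := by linarith
  have hintp : IntegrableOn e (Ioo (0:ℝ) 1) volume :=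
    integrable_exp γ σ2 hγ hσ hUE hE1 hpc p hpmem
  have hemeas := exp_meas γ σ2 hγ hσ hE1 p
  -- integrability of f * e
  have hfe : IntegrableOn (fun u => f u * e u) (Ioo (0:ℝ) 1) volume := by
    apply Integrable.mono' (hintp.const_mul M)
      ((hf.continuousOn.aestronglyMeasurable measurableSet_Ioo).mul hemeas)
    rw [ae_restrict_iff' measurableSet_Ioo]
    apply ae_of_all
    intro u hu
    simp only [Pi.mul_apply]
    rw [Real.norm_eq_abs, abs_mul, abs_of_pos (Real.exp_pos _)]
    apply mul_le_mul_of_nonneg_right _ (Real.exp_pos _).le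
    have := hM u ⟨hu.1.le, hu.2.le⟩; rwa [Real.norm_eq_abs] at this
  have hf1e : IntegrableOn (fun u => f 1 * e u) (Ioo (0:ℝ) 1) volume :=
    hintp.const_mul (f 1)
  -- the difference integral
  have hnum : (∫ u in Ioo (0:ℝ) 1, f u * e u) - f 1 * Z
      = ∫ u in Ioo (0:ℝ) 1, (f u - f 1) * e u := by
    rw [hZdef, ← integral_const_mul, ← integral_sub hfe hf1e]
    congr 1; funext u; ring
  -- absolute value integrand integrable
  have habs : IntegrableOn (fun u => |f u - f 1| * e u) (Ioo (0:ℝ) 1) volume := by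
    apply Integrable.mono' (hintp.const_mul (2*M))
      (((hf.sub continuous_const).abs.continuousOn.aestronglyMeasurable
        measurableSet_Ioo).mul hemeas)
    rw [ae_restrict_iff' measurableSet_Ioo]
    apply ae_of_all
    intro u hu
    simp only [Pi.mul_apply]
    rw [Real.norm_eq_abs, abs_of_nonneg (mul_nonneg (abs_nonneg _) (Real.exp_pos _).le)]
    apply mul_le_mul_of_nonneg_right _ (Real.exp_pos _).le
    have h1 := hM u ⟨hu.1.le, hu.2.le⟩
    rw [Real.norm_eq_abs] at h1
    calc |f u - f 1| ≤ |f u| + |f 1| := abs_sub _ _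
      _ ≤ 2*M := by linarith
  have hsplitset : Ioo (0:ℝ) 1 = Ioc 0 (1-δ) ∪ Ioo (1-δ) 1 :=
    (Set.Ioc_union_Ioo_eq_Ioo h1δ.1.le h1δ.2).symm
  have hsub1 : Ioc (0:ℝ) (1-δ) ⊆ Ioo (0:ℝ) 1 := by
    rw [hsplitset]; exact subset_union_left
  have hsub2 : Ioo (1-δ) (1:ℝ) ⊆ Ioo (0:ℝ) 1 := by
    rw [hsplitset]; exact subset_union_right
  have hdisj : Disjoint (Ioc (0:ℝ) (1-δ)) (Ioo (1-δ) (1:ℝ)) :=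
    Set.disjoint_left.2 fun x hx hx' => absurd hx.2 (not_le.2 hx'.1)
  have hsplit : (∫ u in Ioo (0:ℝ) 1, |f u - f 1| * e u)
      = (∫ u in Ioc (0:ℝ) (1-δ), |f u - f 1| * e u)
        + ∫ u in Ioo (1-δ) (1:ℝ), |f u - f 1| * e u := by
    rw [hsplitset]
    exact setIntegral_union hdisj measurableSet_Ioo (habs.mono_set hsub1)
      (habs.mono_set hsub2)
  -- bound on first piece
  have hbd1 : (∫ u in Ioc (0:ℝ) (1-δ), |f u - f 1| * e u) ≤ 2*M*Cδ := by
    have hnorm : ‖∫ u in Ioc (0:ℝ) (1-δ), |f u - f 1| * e u‖ ≤ (2*M*Cδ) *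
        (volume (Ioc (0:ℝ) (1-δ))).toReal := by
      apply norm_setIntegral_le_of_norm_le_const
      · rw [Real.volume_Ioc]; exact ENNReal.ofReal_lt_top
      · intro u hu
        have huI : u ∈ Ioo (0:ℝ) 1 := hsub1 hu
        have hub : e u ≤ Cδ := by
          have hmono := psi_mono γ σ2 hγ hσ hUE hE1 huI h1δ hu.2
          have : e u ≤ Real.exp (p * Psi γ σ2 (1-δ)) :=
            Real.exp_le_exp.2 (mul_le_mul_of_nonneg_left hmono hpmem.1.le)
          exact le_trans this (hCδb p hpmem)
        have hfb : |f u - f 1| ≤ 2*M := by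
          have h1 := hM u ⟨huI.1.le, huI.2.le⟩
          rw [Real.norm_eq_abs] at h1
          calc |f u - f 1| ≤ |f u| + |f 1| := abs_sub _ _
            _ ≤ 2*M := by linarith
        rw [Real.norm_eq_abs, abs_of_nonneg (mul_nonneg (abs_nonneg _) (Real.exp_pos _).le)]
        exact mul_le_mul hfb hub (Real.exp_pos _).le (by linarith)
    have hvol : (volume (Ioc (0:ℝ) (1-δ))).toReal ≤ 1 := by
      rw [Real.volume_Ioc, ENNReal.toReal_ofReal (by linarith)]
      linarith
    calc (∫ u in Ioc (0:ℝ) (1-δ), |f u - f 1| * e u)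
        ≤ ‖∫ u in Ioc (0:ℝ) (1-δ), |f u - f 1| * e u‖ := le_abs_self _
      _ ≤ (2*M*Cδ) * (volume (Ioc (0:ℝ) (1-δ))).toReal := hnorm
      _ ≤ 2*M*Cδ := by nlinarith [mul_nonneg hM0 hCδ.le]
  -- bound on second piece
  have hbd2 : (∫ u in Ioo (1-δ) (1:ℝ), |f u - f 1| * e u) ≤ (ε/4) * Z := by
    have step1 : (∫ u in Ioo (1-δ) (1:ℝ), |f u - f 1| * e u)
        ≤ ∫ u in Ioo (1-δ) (1:ℝ), (ε/4) * e u := by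
      apply setIntegral_mono_on (habs.mono_set hsub2)
        ((show IntegrableOn (fun u => ε/4 * e u) (Ioo (0:ℝ) 1) volume from
          hintp.const_mul (ε/4)).mono_set hsub2) measurableSet_Ioo
      intro u hu
      apply mul_le_mul_of_nonneg_right _ (Real.exp_pos _).le
      have hd : dist u 1 < δ₀ := by
        rw [Real.dist_eq, abs_of_nonpos (by linarith [hu.2])]
        have h1 : δ ≤ δ₀/2 := min_le_left _ _
        have := hu.1
        linarith
      exact (hfc hd).le
    have step2 : (∫ u in Ioo (1-δ) (1:ℝ), (ε/4) * e u) = (ε/4) * ∫ u in Ioo (1-δ) (1:ℝ), e u := by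
      rw [integral_const_mul]
    have step3 : (∫ u in Ioo (1-δ) (1:ℝ), e u) ≤ Z := by
      apply setIntegral_mono_set hintp (ae_of_all _ fun u => (Real.exp_pos _).le)
        (HasSubset.Subset.eventuallyLE hsub2)
    rw [step2] at step1
    nlinarith
  -- combine
  have hnn : 0 ≤ ∫ u in Ioc (0:ℝ) (1-δ), |f u - f 1| * e u :=
    setIntegral_nonneg measurableSet_Ioc fun u _ =>
      mul_nonneg (abs_nonneg _) (Real.exp_pos _).le
  have hnn2 : 0 ≤ ∫ u in Ioo (1-δ) (1:ℝ), |f u - f 1| * e u :=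
    setIntegral_nonneg measurableSet_Ioo fun u _ =>
      mul_nonneg (abs_nonneg _) (Real.exp_pos _).le
  have hab : |(∫ u in Ioo (0:ℝ) 1, f u * e u) - f 1 * Z| ≤ 2*M*Cδ + (ε/4)*Z := by
    rw [hnum]
    have hea : ∀ u, |e u| = e u := fun u => abs_of_pos (Real.exp_pos _)
    have h1 : |∫ u in Ioo (0:ℝ) 1, (f u - f 1) * e u|
        ≤ ∫ u in Ioo (0:ℝ) 1, |f u - f 1| * e u := by
      have h0 := norm_integral_le_integral_norm (μ := volume.restrict (Ioo (0:ℝ) 1))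
        (fun u => (f u - f 1) * e u)
      simpa [Real.norm_eq_abs, abs_mul, hea] using h0
    rw [hsplit] at h1
    linarith
  -- finish
  have hbr : bracket γ σ2 f p = (∫ u in Ioo (0:ℝ) 1, f u * e u) / Z := rfl
  rw [hbr, Real.dist_eq]
  have key : |(∫ u in Ioo (0:ℝ) 1, f u * e u) / Z - f 1|
      = |(∫ u in Ioo (0:ℝ) 1, f u * e u) - f 1 * Z| / Z := by
    have e1 : (∫ u in Ioo (0:ℝ) 1, f u * e u) / Z - f 1
        = ((∫ u in Ioo (0:ℝ) 1, f u * e u) - f 1 * Z) / Z := by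
      field_simp
    rw [e1, abs_div, abs_of_pos hZpos]
  rw [key, div_lt_iff₀ hZpos]
  have hMC : 2*M*Cδ ≤ (ε/4)*Z := by
    have : 8*M*Cδ ≤ ε * Z := by
      rw [div_le_iff₀ hε] at hZ8
      linarith [hZ8]
    linarith
  nlinarith
end C6

section Reduce

/-- clamp to [0,1] -/
noncomputable def clamp (x : ℝ) : ℝ := min 1 (max 0 x)

lemma clamp_cont : Continuous clamp :=
  continuous_const.min (continuous_const.max continuous_id)

lemma clamp_mem (x : ℝ) : clamp x ∈ Icc (0:ℝ) 1 := by
  constructor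
  · apply le_min (by norm_num) (le_max_left _ _)
  · exact min_le_left _ _

lemma clamp_eq {x : ℝ} (hx : x ∈ Icc (0:ℝ) 1) : clamp x = x := by
  rw [clamp, max_eq_right hx.1, min_eq_right hx.2]

variable (γ σ2 f : ℝ → ℝ)

lemma gam_tilde (hu : ∀ v ∈ Icc (0:ℝ) 1, True) : True := trivial

lemma Gam_eq (u : ℝ) (hu : u ∈ Icc (0:ℝ) 1) : Gam (γ ∘ clamp) u = Gam γ u := by
  apply intervalIntegral.integral_congr
  intro v hv
  have hv' : v ∈ Icc (0:ℝ) 1 :=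
    Set.ordConnected_Icc.uIcc_subset (left_mem_Icc.2 (by norm_num)) hu hv
  simp [Function.comp, clamp_eq hv']

lemma mg_eq : mg (γ ∘ clamp) = mg γ := by
  have := Gam_eq γ 1 (right_mem_Icc.2 (by norm_num))
  simpa [Gam, mg] using this

lemma Psi_eq (u : ℝ) (hu : u ∈ Icc (0:ℝ) 1) :
    Psi (γ ∘ clamp) (σ2 ∘ clamp) u = Psi γ σ2 u := by
  apply intervalIntegral.integral_congr
  intro v hv
  have hv' : v ∈ Icc (0:ℝ) 1 :=
    Set.ordConnected_Icc.uIcc_subset ⟨by norm_num, by norm_num⟩ hu hv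
  simp only [Function.comp, clamp_eq hv', Gam_eq γ v hv', mg_eq]

lemma pcrit_eq : pcrit (γ ∘ clamp) (σ2 ∘ clamp) = pcrit γ σ2 := by
  have h1 : clamp 1 = 1 := clamp_eq (right_mem_Icc.2 (by norm_num))
  simp only [pcrit, Function.comp, mg_eq, h1]

lemma bracket_eq (p : ℝ) :
    bracket (γ ∘ clamp) (σ2 ∘ clamp) (f ∘ clamp) p = bracket γ σ2 f p := by
  unfold bracket
  have hEq : ∀ u ∈ Ioo (0:ℝ) 1,
      Psi (γ ∘ clamp) (σ2 ∘ clamp) u = Psi γ σ2 u := fun u hu =>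
    Psi_eq γ σ2 u (Ioo_subset_Icc_self hu)
  congr 1
  · apply setIntegral_congr_fun measurableSet_Ioo
    intro u hu
    simp only [Function.comp, clamp_eq (Ioo_subset_Icc_self hu), hEq u hu]
  · apply setIntegral_congr_fun measurableSet_Ioo
    intro u hu
    simp only [hEq u hu]
end Reduce

/-- under (UE), (E1), p_c > 0 and Z̄^{p_c} = +∞, for every continuous
f : [0,1] → ℝ one has ⟨f, Π̄^p⟩ → f(1) as p → p_c⁻. -/
theorem stmt10 (γ σ2 : ℝ → ℝ) (hγc : ContinuousOn γ (Set.Icc 0 1))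
    (hσc : ContinuousOn σ2 (Set.Icc 0 1)) (hUE : ∀ u ∈ Set.Icc (0:ℝ) 1, 0 < σ2 u)
    (hE1 : ∀ u ∈ Set.Ioo (0:ℝ) 1, 0 < Gam γ u - mg γ * u)
    (hpc : 0 < pcrit γ σ2)
    (hZ : (∫⁻ u in Set.Ioo (0:ℝ) 1,
        ENNReal.ofReal (Real.exp (pcrit γ σ2 * Psi γ σ2 u))) = ⊤)
    (f : ℝ → ℝ) (hf : ContinuousOn f (Set.Icc 0 1)) :
    Filter.Tendsto (bracket γ σ2 f)
      (nhdsWithin (pcrit γ σ2) (Set.Iio (pcrit γ σ2))) (nhds (f 1)) := by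
  set γ' := γ ∘ clamp with hγ'def
  set σ2' := σ2 ∘ clamp with hσ'def
  set f' := f ∘ clamp with hf'def
  have hγ' : Continuous γ' := hγc.comp_continuous clamp_cont clamp_mem
  have hσ' : Continuous σ2' := hσc.comp_continuous clamp_cont clamp_mem
  have hf' : Continuous f' := hf.comp_continuous clamp_cont clamp_mem
  have hUE' : ∀ u ∈ Set.Icc (0:ℝ) 1, 0 < σ2' u := by
    intro u hu
    simp only [hσ'def, Function.comp, clamp_eq hu]
    exact hUE u hu
  have hE1' : ∀ u ∈ Set.Ioo (0:ℝ) 1, 0 < Gam γ' u - mg γ' * u := by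
    intro u hu
    rw [Gam_eq γ u (Ioo_subset_Icc_self hu), mg_eq]
    exact hE1 u hu
  have hpc' : 0 < pcrit γ' σ2' := by rw [pcrit_eq]; exact hpc
  have hZ' : (∫⁻ u in Set.Ioo (0:ℝ) 1,
      ENNReal.ofReal (Real.exp (pcrit γ' σ2' * Psi γ' σ2' u))) = ⊤ := by
    rw [← hZ]
    apply setLIntegral_congr_fun measurableSet_Ioo
    intro u hu
    dsimp only
    rw [pcrit_eq, Psi_eq γ σ2 u (Ioo_subset_Icc_self hu)]
  have hcore := core γ' σ2' f' hγ' hσ' hf' hUE' hE1' hpc' hZ'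
  rw [pcrit_eq] at hcore
  have hf1 : f' 1 = f 1 := by
    simp only [hf'def, Function.comp, clamp_eq (right_mem_Icc.2 (by norm_num : (0:ℝ) ≤ 1))]
  rw [hf1] at hcore
  exact hcore.congr (fun p => bracket_eq γ σ2 f p)
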